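/- Let A be a C*-algebra such that for all nonzero positive elements c, d ∈ A and every η > 0 there exists x ∈ A with ‖x·c·x* − d‖ < η (this holds in particular when A is purely infinite and simple). Then for every positive a ∈ A with 1/2 < ‖a‖ ≤ 1, every positive b ∈ A with ‖b‖ ≤ 1, and every ε > 0 there exists z ∈ A with ‖z‖ ≤ √2 and ‖z·a·z* − b‖ < ε. -/

import Mathlib

set_option maxHeartbeats 1000000

/-- In a C*-algebra in which every nonzero positive element Cuntz-dominates every nonzero
positive element, any positive contraction of norm `> 1/2` dominates any positive contraction
with witnesses of norm at most `√2`. -/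
theorem stmt_16 {A : Type*} [NonUnitalCStarAlgebra A]
    (h : ∀ c d : A, (∃ y : A, c = star y * y) → (∃ y : A, d = star y * y) →
      c ≠ 0 → d ≠ 0 → ∀ η > (0 : ℝ), ∃ x : A, ‖x * c * star x - d‖ < η)
    (a b : A) (hapos : ∃ y : A, a = star y * y) (hbpos : ∃ y : A, b = star y * y)
    (ha1 : 1 / 2 < ‖a‖) (ha2 : ‖a‖ ≤ 1) (hb : ‖b‖ ≤ 1) :
    ∀ ε > (0 : ℝ), ∃ z : A, ‖z‖ ≤ Real.sqrt 2 ∧ ‖z * a * star z - b‖ < ε := by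
  intro ε hε
  obtain ⟨y₀, hy₀⟩ := hapos
  have hsaa : IsSelfAdjoint a := hy₀ ▸ IsSelfAdjoint.star_mul_self y₀
  have inr_sq : ∀ y : A, ((star y * y : A) : Unitization ℂ A)
      = star (y : Unitization ℂ A) * (y : Unitization ℂ A) := fun y => by
    rw [Unitization.inr_mul, Unitization.inr_star]
  have hainr : (0 : Unitization ℂ A) ≤ (a : Unitization ℂ A) := by
    rw [hy₀, inr_sq]
    exact star_mul_self_nonneg _
  by_cases hb0 : b = 0
  · exact ⟨0, by simp [Real.sqrt_nonneg], by simp [hb0, hε]⟩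
  set α : ℝ := (1 / 2 + ‖a‖) / 2 with hαdef
  have hα1 : 1 / 2 < α := by rw [hαdef]; linarith
  have hα2 : α < ‖a‖ := by rw [hαdef]; linarith
  have hα0 : (0 : ℝ) < α := by linarith
  -- the quasispectrum of `a` is nonneg
  have hσ : ∀ t ∈ quasispectrum ℝ a, (0 : ℝ) ≤ t := by
    rw [Unitization.quasispectrum_eq_spectrum_inr' ℝ ℂ a]
    exact spectrum_nonneg_of_nonneg hainr
  have hmem : ‖a‖ ∈ quasispectrum ℝ a := by
    have h2 := CStarAlgebra.norm_mem_spectrum_of_nonneg hainr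
    rw [Unitization.norm_inr] at h2
    rwa [Unitization.quasispectrum_eq_spectrum_inr' ℝ ℂ a]
  -- the cut-off element `c`
  set g : ℝ → ℝ := fun t => max (t - α) 0 with hgdef
  have hgc : ContinuousOn g (quasispectrum ℝ a) :=
    ((continuous_id.sub continuous_const).max continuous_const).continuousOn
  have hg0 : g 0 = 0 := max_eq_right (by linarith)
  set c : A := cfcₙ g a with hcdef
  have hcposEx : ∃ y : A, c = star y * y := by
    refine ⟨cfcₙ (fun t => Real.sqrt (g t)) a, ?_⟩
    have hct : ContinuousOn (fun t => Real.sqrt (g t)) (quasispectrum ℝ a) :=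
      (Real.continuous_sqrt.comp
        ((continuous_id.sub continuous_const).max continuous_const)).continuousOn
    have hc0 : Real.sqrt (g 0) = 0 := by rw [hg0, Real.sqrt_zero]
    rw [(cfcₙ_predicate (fun t => Real.sqrt (g t)) a).star_eq,
      ← cfcₙ_mul _ _ a hct hc0 hct hc0]
    exact cfcₙ_congr fun t ht => (Real.mul_self_sqrt (le_max_right _ _)).symm
  have hcne : c ≠ 0 := by
    intro h0
    have hle := norm_apply_le_norm_cfcₙ g a hmem hgc hg0 hsaa
    rw [← hcdef, h0, norm_zero] at hle
    rw [show g ‖a‖ = ‖a‖ - α from max_eq_left (by linarith)] at hle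
    have h3 : |‖a‖ - α| ≤ 0 := hle
    rw [abs_le] at h3
    linarith [h3.2]
  set δ : ℝ := min ε (2 * α - 1) with hδdef
  have hδ0 : 0 < δ := lt_min hε (by linarith)
  obtain ⟨x, hx⟩ := h c b hcposEx hbpos hcne hb0 δ hδ0
  -- the function `f`
  set f : ℝ → ℝ := fun t => Real.sqrt (max (t - α) 0 / max t α) with hfdef
  have hdenom : ∀ t : ℝ, 0 < max t α := fun t => lt_max_of_lt_right hα0
  have hfc : ContinuousOn f (quasispectrum ℝ a) :=
    (Real.continuous_sqrt.comp <|
      ((continuous_id.sub continuous_const).max continuous_const).div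
        (continuous_id.max continuous_const) fun t => (hdenom t).ne').continuousOn
  have hf0 : f 0 = 0 := by
    simp only [hfdef]
    rw [max_eq_right (by linarith : (0 : ℝ) - α ≤ 0), zero_div, Real.sqrt_zero]
  have hff : ∀ t : ℝ, f t * f t = max (t - α) 0 / max t α := fun t =>
    Real.mul_self_sqrt (div_nonneg (le_max_right _ _) (hdenom t).le)
  have hsa : IsSelfAdjoint (cfcₙ f a) := cfcₙ_predicate f a
  set z : A := x * cfcₙ f a with hzdef
  -- `z * a * star z = x * c * star x`
  have key : cfcₙ f a * a * cfcₙ f a = c := by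
    have e1 : cfcₙ (fun t => f t * id t * f t) a = cfcₙ g a := by
      apply cfcₙ_congr
      intro t ht
      have ht0 := hσ t ht
      show f t * t * f t = g t
      rw [show f t * t * f t = (f t * f t) * t by ring, hff t]
      rcases le_or_gt t α with hcase | hcase
      · rw [max_eq_right (by linarith : t - α ≤ 0), zero_div, zero_mul]
        exact (max_eq_right (by linarith : t - α ≤ 0)).symm
      · rw [max_eq_left (by linarith : α ≤ t)]
        simp only [hgdef]
        rw [max_eq_left (by linarith : (0 : ℝ) ≤ t - α)]
        field_simp
        rw [div_self (ne_of_gt (by linarith : (0:ℝ) < t))]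
    rw [hcdef, ← e1,
      cfcₙ_mul _ f a (by exact hfc.mul continuousOn_id) (by simp [hf0]) hfc hf0,
      cfcₙ_mul f id a hfc hf0 continuousOn_id rfl, cfcₙ_id ℝ a]
  have hzaz : z * a * star z = x * c * star x := by
    rw [hzdef, star_mul, hsa.star_eq]
    calc x * cfcₙ f a * a * (cfcₙ f a * star x)
        = x * (cfcₙ f a * a * cfcₙ f a) * star x := by noncomm_ring
      _ = x * c * star x := by rw [key]
  have hfinal : ‖z * a * star z - b‖ < ε := by
    rw [hzaz]; exact hx.trans_le (min_le_left _ _)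
  refine ⟨z, ?_, hfinal⟩
  -- norm bound on `z`
  set φ : ℝ → ℝ := fun t => max (t - α) 0 / max t α with hφdef
  have hφc : ContinuousOn φ (quasispectrum ℝ a) :=
    (((continuous_id.sub continuous_const).max continuous_const).div
      (continuous_id.max continuous_const) fun t => (hdenom t).ne').continuousOn
  have hφ0 : φ 0 = 0 := by
    simp only [hφdef]
    rw [max_eq_right (by linarith : (0 : ℝ) - α ≤ 0), zero_div]
  set ψ : ℝ → ℝ := fun t => α⁻¹ * g t with hψdef
  have hψc : ContinuousOn ψ (quasispectrum ℝ a) :=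
    (continuous_const.mul ((continuous_id.sub continuous_const).max continuous_const)).continuousOn
  have hψ0 : ψ 0 = 0 := by simp only [hψdef, hg0, mul_zero]
  have hφψ : ∀ t : ℝ, φ t ≤ ψ t := by
    intro t
    calc φ t ≤ max (t - α) 0 / α :=
          div_le_div_of_nonneg_left (le_max_right _ _) hα0 (le_max_right _ _)
      _ = ψ t := (div_eq_inv_mul _ _)
  -- `z * star z = x * cfcₙ φ a * star x`
  have hzz : z * star z = x * cfcₙ φ a * star x := by
    rw [hzdef, star_mul, hsa.star_eq, show x * cfcₙ f a * (cfcₙ f a * star x)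
      = x * (cfcₙ f a * cfcₙ f a) * star x by noncomm_ring,
      ← cfcₙ_mul f f a hfc hf0 hfc hf0]
    congr 2
    exact cfcₙ_congr fun t ht => hff t
  -- the difference `cfcₙ ψ a - cfcₙ φ a` is a square
  set θ : ℝ → ℝ := fun t => Real.sqrt (ψ t - φ t) with hθdef
  have hθc : ContinuousOn θ (quasispectrum ℝ a) :=
    (Real.continuous_sqrt.comp
      ((continuous_const.mul ((continuous_id.sub continuous_const).max continuous_const)).sub
        (((continuous_id.sub continuous_const).max continuous_const).div
          (continuous_id.max continuous_const) fun t => (hdenom t).ne'))).continuousOn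
  have hθ0 : θ 0 = 0 := by rw [hθdef]; simp only [hψ0, hφ0, sub_zero, Real.sqrt_zero]
  set w : A := cfcₙ θ a with hwdef
  have hwsq : cfcₙ ψ a - cfcₙ φ a = star w * w := by
    rw [hwdef, (cfcₙ_predicate θ a).star_eq, ← cfcₙ_mul θ θ a hθc hθ0 hθc hθ0,
      ← cfcₙ_sub _ _ a hψc hψ0 hφc hφ0]
    exact cfcₙ_congr fun t ht => (Real.mul_self_sqrt (by linarith [hφψ t])).symm
  set u : A := w * star x with hudef
  have eqA : x * cfcₙ ψ a * star x = z * star z + star u * u := by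
    rw [hzz, hudef, star_mul, star_star,
      show x * star w * (w * star x) = x * (star w * w) * star x by noncomm_ring,
      ← hwsq]
    noncomm_ring
  -- pass to the unitization for the order argument
  have hle : (↑(z * star z) : Unitization ℂ A) ≤ ↑(x * cfcₙ ψ a * star x) := by
    rw [eqA, Unitization.inr_add]
    refine le_add_of_nonneg_right ?_
    rw [inr_sq]
    exact star_mul_self_nonneg _
  have hnn : (0 : Unitization ℂ A) ≤ ↑(z * star z) := by
    rw [show z * star z = star (star z) * star z by rw [star_star], inr_sq]
    exact star_mul_self_nonneg _
  have hnormle : ‖z * star z‖ ≤ ‖x * cfcₙ ψ a * star x‖ := by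
    have := CStarAlgebra.norm_le_norm_of_nonneg_of_le hnn hle
    simpa only [Unitization.norm_inr] using this
  -- compute the norm of the right-hand side
  have hψc' : cfcₙ ψ a = α⁻¹ • c := by
    rw [hcdef, ← cfcₙ_const_mul α⁻¹ g a hgc hg0]
  have hxcb : ‖x * c * star x‖ ≤ 2 * α := by
    have h1 : ‖x * c * star x‖ ≤ ‖x * c * star x - b‖ + ‖b‖ := by
      simpa using norm_add_le (x * c * star x - b) b
    have h2 : δ ≤ 2 * α - 1 := min_le_right _ _
    linarith [hx]
  have hnorm2 : ‖x * cfcₙ ψ a * star x‖ ≤ 2 := by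
    rw [hψc', mul_smul_comm, smul_mul_assoc, norm_smul, Real.norm_eq_abs,
      abs_of_pos (inv_pos.mpr hα0)]
    calc α⁻¹ * ‖x * c * star x‖ ≤ α⁻¹ * (2 * α) :=
          mul_le_mul_of_nonneg_left hxcb (inv_pos.mpr hα0).le
      _ = 2 := by field_simp
  have hzn : ‖z‖ * ‖z‖ ≤ 2 := by
    rw [← CStarRing.norm_self_mul_star]
    exact hnormle.trans hnorm2
  nlinarith [norm_nonneg z, Real.sqrt_nonneg 2, Real.sq_sqrt (by norm_num : (0 : ℝ) ≤ 2), hzn]
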